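/- Let X be a finite subset of Aut(T). Then: (1) X satisfies N2 if and only if X satisfies N2′: 2δ(x⁻¹, y) ≤ min(|x|, |y|) for all x, y ∈ X^± with x ≠ y⁻¹. (2) If X satisfies N2, then X satisfies N3 if and only if X satisfies N3′: δ(x⁻¹, y) + δ(y⁻¹, z) < |y| for all x, y, z ∈ X^± with x ≠ y⁻¹ and y ≠ z⁻¹. -/

import Mathlib

noncomputable section

open Pointwise

namespace TreePaper

variable {V : Type*}

section Defs

variable (T : SimpleGraph V) (v0 : V)

/-- The vertex set of the geodesic segment `[u, w]` in the tree `T`. -/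
def seg (u w : V) : Set V := {x | T.dist u x + T.dist x w = T.dist u w}

/-- `|g| = d(v0, g·v0)`. -/
def nrm (g : T ≃g T) : ℕ := T.dist v0 (g v0)

/-- `δ(g, h) = (|g| + |h| - |g⁻¹h|)/2`, as a rational number. -/
noncomputable def dlt (g h : T ≃g T) : ℚ :=
  ((nrm T v0 g : ℚ) + (nrm T v0 h : ℚ) - (nrm T v0 (g⁻¹ * h) : ℚ)) / 2

/-- An automorphism is elliptic if it fixes a vertex or inverts an edge. -/
def IsElliptic (g : T ≃g T) : Prop :=
  (∃ v : V, g v = v) ∨ (∃ u w : V, T.Adj u w ∧ g u = w ∧ g w = u)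

/-- Hyperbolic = not elliptic. -/
def IsHyperbolic (g : T ≃g T) : Prop := ¬ IsElliptic T g

/-- Translation length: the minimum of `d(v, g·v)` over all vertices `v`. -/
noncomputable def tl (g : T ≃g T) : ℕ := sInf (Set.range fun v : V => T.dist v (g v))

/-- The (vertex set of the) axis of `g`: vertices moved exactly the translation length. -/
def axisSet (g : T ≃g T) : Set V := {v : V | T.dist v (g v) = tl T g}

/-- A subgroup is purely hyperbolic if every nontrivial element is hyperbolic. -/
def PurelyHyperbolic (G : Subgroup (T ≃g T)) : Prop :=
  ∀ g ∈ G, g ≠ 1 → IsHyperbolic T g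

/-- `X^± = X ∪ X⁻¹`. -/
def Xpm (X : Set (T ≃g T)) : Set (T ≃g T) := X ∪ X⁻¹

/-- Condition N1: `X ∩ X⁻¹ = ∅`. -/
def N1 (X : Set (T ≃g T)) : Prop := X ∩ X⁻¹ = ∅

/-- Condition N2: `|xy| ≥ max (|x|, |y|)` for `x, y ∈ X^±` with `x ≠ y⁻¹`. -/
def N2 (X : Set (T ≃g T)) : Prop :=
  ∀ x ∈ Xpm T X, ∀ y ∈ Xpm T X, x ≠ y⁻¹ →
    max (nrm T v0 x) (nrm T v0 y) ≤ nrm T v0 (x * y)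

/-- Condition N3: `|xyz| > |x| + |z| - |y|` for suitable `x, y, z ∈ X^±`. -/
def N3 (X : Set (T ≃g T)) : Prop :=
  ∀ x ∈ Xpm T X, ∀ y ∈ Xpm T X, ∀ z ∈ Xpm T X, x ≠ y⁻¹ → y ≠ z⁻¹ →
    (nrm T v0 x : ℤ) + (nrm T v0 z : ℤ) - (nrm T v0 y : ℤ) < (nrm T v0 (x * y * z) : ℤ)

/-- Condition N2′: `2δ(x⁻¹, y) ≤ min (|x|, |y|)`. -/
noncomputable def N2' (X : Set (T ≃g T)) : Prop :=
  ∀ x ∈ Xpm T X, ∀ y ∈ Xpm T X, x ≠ y⁻¹ →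
    2 * dlt T v0 x⁻¹ y ≤ min (nrm T v0 x : ℚ) (nrm T v0 y : ℚ)

/-- Condition N3′: `δ(x⁻¹, y) + δ(y⁻¹, z) < |y|`. -/
noncomputable def N3' (X : Set (T ≃g T)) : Prop :=
  ∀ x ∈ Xpm T X, ∀ y ∈ Xpm T X, ∀ z ∈ Xpm T X, x ≠ y⁻¹ → y ≠ z⁻¹ →
    dlt T v0 x⁻¹ y + dlt T v0 y⁻¹ z < (nrm T v0 y : ℚ)

/-- `X` is N-reduced: no nontrivial elliptic elements, and N1, N2, N3 hold. -/
def NReduced (X : Set (T ≃g T)) : Prop :=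
  (∀ x ∈ X, x ≠ 1 → ¬ IsElliptic T x) ∧ N1 T X ∧ N2 T v0 X ∧ N3 T v0 X

/-- `H(g)`: the vertex set of the initial segment of `[v0, g·v0]` of length `⌊|g|/2⌋`. -/
def halfSet (g : T ≃g T) : Set V :=
  {x : V | x ∈ seg T v0 (g v0) ∧ T.dist v0 x ≤ nrm T v0 g / 2}

/-- The endpoint of `H(g)`: the vertex on `[v0, g·v0]` at distance `⌊|g|/2⌋` from `v0`.
(Since paths in a tree starting at `v0` are uniquely determined by their endpoints, we
identify the path `H(g)` with this vertex.) -/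
noncomputable def halfVertex (g : T ≃g T) : V :=
  letI := Classical.dec (∃ m, m ∈ seg T v0 (g v0) ∧ T.dist v0 m = nrm T v0 g / 2)
  if h : ∃ m, m ∈ seg T v0 (g v0) ∧ T.dist v0 m = nrm T v0 g / 2 then h.choose else v0

/-- `X` is a free basis of `⟨X⟩`: the homomorphism from the free group on `X` induced
by the inclusion is an isomorphism onto `⟨X⟩`. -/
def IsFreeBasis (X : Set (T ≃g T)) : Prop :=
  Function.Injective (FreeGroup.lift (fun x : X => (x : T ≃g T))) ∧
  MonoidHom.range (FreeGroup.lift (fun x : X => (x : T ≃g T))) = Subgroup.closure X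

/-- A subgroup of `Aut T` is discrete iff some finite set of vertices has trivial
pointwise stabilizer. -/
def IsDiscrete (G : Subgroup (T ≃g T)) : Prop :=
  ∃ F : Finset V, ∀ g ∈ G, (∀ v ∈ F, g v = v) → g = 1

end Defs

section Order

variable (T : SimpleGraph V) (v0 : V)

/-- The assumed properties of the chosen well-ordering of paths starting at `v0`
(paths from `v0` are identified with their endpoints): it is a well-order, shorter
paths precede longer paths, and it is lexicographic. -/
structure IsPathOrder (lt : V → V → Prop) : Prop where
  wellOrder : IsWellOrder V lt
  short : ∀ u w : V, T.dist v0 u < T.dist v0 w → lt u w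
  lex : ∀ u w : V, T.dist v0 u = T.dist v0 w → ∀ u' w' : V,
    u' ∈ seg T v0 u → w' ∈ seg T v0 w → T.dist v0 u' = T.dist v0 w' → lt u' w' → lt u w

/-- The ordering `≺` on two-element sets of paths (identified with their endpoints):
`A ≺ B` iff `A ≠ B` and the least element of the symmetric difference lies in `A`. -/
def pairLt (lt : V → V → Prop) (A B : Set V) : Prop :=
  A ≠ B ∧ ∃ m ∈ (A \ B) ∪ (B \ A), m ∈ A ∧ ∀ x ∈ (A \ B) ∪ (B \ A), x ≠ m → lt m x

/-- `g ≺ h` iff `|g| = |h|` and `{H(g), H(g⁻¹)} ≺ {H(h), H(h⁻¹)}`. -/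
noncomputable def autPrec (lt : V → V → Prop) (g h : T ≃g T) : Prop :=
  nrm T v0 g = nrm T v0 h ∧
    pairLt lt {halfVertex T v0 g, halfVertex T v0 g⁻¹}
      {halfVertex T v0 h, halfVertex T v0 h⁻¹}

/-- `g <* h` iff `|g| < |h|` or `g ≺ h`. -/
noncomputable def autLtStar (lt : V → V → Prop) (g h : T ≃g T) : Prop :=
  nrm T v0 g < nrm T v0 h ∨ autPrec T v0 lt g h

/-- Condition N4: `x <* xy` for all `x, y ∈ X^±` with `x ≠ y⁻¹`. -/
noncomputable def N4 (lt : V → V → Prop) (X : Set (T ≃g T)) : Prop :=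
  ∀ x ∈ Xpm T X, ∀ y ∈ Xpm T X, x ≠ y⁻¹ → autLtStar T v0 lt x (x * y)

/-- `X` is strongly N-reduced (w.r.t. `v0` and `<*`): a free basis satisfying N1 and N4. -/
noncomputable def StronglyNReduced (lt : V → V → Prop) (X : Set (T ≃g T)) : Prop :=
  IsFreeBasis T X ∧ N1 T X ∧ N4 T v0 lt X

end Order

section Words

variable (T : SimpleGraph V)

/-- The product `a₀ a₁ ⋯ a_{k-1}`. -/
def wordProd (a : ℕ → T ≃g T) (k : ℕ) : T ≃g T := ((List.range k).map a).prod

/-- The product `aᵢ a_{i+1} ⋯ a_j` (inclusive endpoints). -/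
def segProd (a : ℕ → T ≃g T) (i j : ℕ) : T ≃g T := ((List.range' i (j + 1 - i)).map a).prod

/-- `a 0, …, a (n-1)` is a reduced word in `X`: each letter lies in `X^±` and no letter
is followed by its inverse. -/
def IsReducedWord (X : Set (T ≃g T)) (a : ℕ → T ≃g T) (n : ℕ) : Prop :=
  (∀ i < n, a i ∈ Xpm T X) ∧ ∀ i, i + 1 < n → a (i + 1) ≠ (a i)⁻¹

end Words

section Geometry

variable (T : SimpleGraph V) (v0 : V)

/-- `p` is a nearest-point projection of `w` to the set `A`. -/
def NearestPt (A : Set V) (w p : V) : Prop :=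
  p ∈ A ∧ ∀ z ∈ A, T.dist w p ≤ T.dist w z

/-- Distance between two sets of vertices. -/
noncomputable def setDist (A B : Set V) : ℕ :=
  sInf {n : ℕ | ∃ a ∈ A, ∃ b ∈ B, T.dist a b = n}

/-- A vertex `p` of the axis of `g` lies in the half-open interval `U_g^0`
(of radius `l(g)/2` about the projection `c` of `v0`, closed at the `<`-smaller end):
either `d(c,p) < l(g)/2`, or `d(c,p) = l(g)/2` and `p` precedes the opposite boundary
vertex in the ordering. -/
def inU0 (lt : V → V → Prop) (g : T ≃g T) (c p : V) : Prop :=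
  2 * T.dist c p < tl T g ∨
    (2 * T.dist c p = tl T g ∧
      ∀ p', p' ∈ axisSet T g → T.dist c p' = T.dist c p → p' ≠ p → lt p p')

/-- `X` admits a fundamental system: `X` has no nontrivial elliptic elements and for all
distinct `g, h ∈ X`, the projection of the axis of `h` to the axis of `g` is contained
in `U_g^0`. -/
def AdmitsFundamentalSystem (lt : V → V → Prop) (X : Set (T ≃g T)) : Prop :=
  (∀ x ∈ X, x ≠ 1 → ¬ IsElliptic T x) ∧
  ∀ g ∈ X, ∀ h ∈ X, g ≠ h → ∀ c z p : V,
    NearestPt T (axisSet T g) v0 c → z ∈ axisSet T h →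
    NearestPt T (axisSet T g) z p → inU0 T lt g c p

end Geometry


section Helpers

open SimpleGraph

variable [DecidableEq V] {T : SimpleGraph V}

private lemma path_len (hT : T.IsTree) {u v : V} {p : T.Walk u v} (hp : p.IsPath) :
    p.length = T.dist u v := by
  obtain ⟨q, hq, hql⟩ := hT.isConnected.exists_path_of_dist u v
  have h : (⟨p, hp⟩ : T.Path u v) = ⟨q, hq⟩ := hT.IsAcyclic.path_unique _ _
  have := congrArg (fun r : T.Path u v => (r : T.Walk u v).length) h
  simpa [hql] using this

private lemma concat_path (hT : T.IsTree) {u v w : V} {p : T.Walk u v} (hp : p.IsPath)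
    (h : T.Adj v w) (hw : w ∉ p.support) : (p.concat h).IsPath := by
  rw [← Walk.isPath_reverse_iff, Walk.reverse_concat]
  exact hp.reverse.cons (by simpa [Walk.support_reverse] using hw)

private lemma dist_of_mem (hT : T.IsTree) {u v z : V} {p : T.Walk u v}
    (hp : p.length = T.dist u v) (hz : z ∈ p.support) :
    T.dist u z + T.dist z v = T.dist u v := by
  have h1 := SimpleGraph.dist_le (p.takeUntil z hz)
  have h2 := SimpleGraph.dist_le (p.dropUntil z hz)
  have h3 : (p.takeUntil z hz).length + (p.dropUntil z hz).length = p.length := by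
    rw [← Walk.length_append, p.take_spec hz]
  have h4 : T.dist u v ≤ T.dist u z + T.dist z v := hT.isConnected.dist_triangle
  omega

private lemma getVert_last_aux {b y aV : V} (p0 : T.Walk b y) (h : T.Adj y aV) :
    (p0.concat h).getVert ((p0.concat h).length - 1) = y := by
  have hlen : (p0.concat h).length - 1 = p0.length := by rw [Walk.length_concat]; omega
  rw [hlen, Walk.concat_eq_append, Walk.getVert_append, if_neg (lt_irrefl _), Nat.sub_self,
    Walk.getVert_zero]

private lemma getVert_last_dropUntil {x y z : V} {p : T.Walk x y} (hz : z ∈ p.support)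
    (hzy : z ≠ y) :
    (p.dropUntil z hz).getVert ((p.dropUntil z hz).length - 1) = p.getVert (p.length - 1) := by
  have hsp := p.take_spec hz
  have hlen : (p.takeUntil z hz).length + (p.dropUntil z hz).length = p.length := by
    rw [← Walk.length_append, hsp]
  have hpos : 1 ≤ (p.dropUntil z hz).length := by
    rcases Nat.eq_zero_or_pos (p.dropUntil z hz).length with h0 | h1
    · exact absurd (Walk.eq_of_length_eq_zero h0) hzy
    · exact h1
  have hcomb : ((p.takeUntil z hz).append (p.dropUntil z hz)).getVert (p.length - 1) =
      p.getVert (p.length - 1) := by rw [hsp]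
  rw [← hcomb, Walk.getVert_append, if_neg (by omega)]
  congr 1
  omega

private lemma exists_toward (hT : T.IsTree) {a b : V} (hab : a ≠ b) :
    ∃ u, T.Adj a u ∧ T.dist u b + 1 = T.dist a b := by
  obtain ⟨p, hp, hl⟩ := hT.isConnected.exists_path_of_dist a b
  cases p with
  | nil => exact absurd rfl hab
  | @cons _ v' _ hadj r =>
    refine ⟨v', hadj, ?_⟩
    have h1 : T.dist v' b ≤ r.length := SimpleGraph.dist_le r
    have h2 : T.dist a b ≤ T.dist a v' + T.dist v' b := hT.isConnected.dist_triangle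
    have h3 : T.dist a v' ≤ 1 := by simpa using SimpleGraph.dist_le hadj.toWalk
    have h4 : r.length + 1 = T.dist a b := by simpa using hl
    omega

private lemma geodesic_with_penult (hT : T.IsTree) {a b u : V} (hu : T.Adj a u)
    (hub : T.dist u b + 1 = T.dist a b) :
    ∃ p : T.Walk b a, p.IsPath ∧ p.length = T.dist a b ∧ p.getVert (p.length - 1) = u := by
  obtain ⟨p0, hp0, hl0⟩ := hT.isConnected.exists_path_of_dist b u
  have hna : a ∉ p0.support := by
    intro ha
    have h1 := dist_of_mem hT hl0 ha
    have h2 : T.dist a u = 1 := SimpleGraph.dist_eq_one_iff_adj.mpr hu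
    have c1 : T.dist b a = T.dist a b := SimpleGraph.dist_comm
    have c2 : T.dist b u = T.dist u b := SimpleGraph.dist_comm
    omega
  refine ⟨p0.concat hu.symm, concat_path hT hp0 hu.symm hna, ?_, getVert_last_aux p0 hu.symm⟩
  rw [Walk.length_concat, hl0]
  have c2 : T.dist b u = T.dist u b := SimpleGraph.dist_comm
  omega

private lemma btw_of_branch (hT : T.IsTree) {a b c u v : V} (hu : T.Adj a u) (hv : T.Adj a v)
    (huv : u ≠ v) (hub : T.dist u b + 1 = T.dist a b) (hvc : T.dist v c + 1 = T.dist a c) :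
    T.dist b c = T.dist a b + T.dist a c := by
  obtain ⟨p, hP, hpl, hpu⟩ := geodesic_with_penult hT hu hub
  obtain ⟨q, hQ, hql, hqv⟩ := geodesic_with_penult hT hv hvc
  have hint : ∀ z, z ∈ p.support → z ∈ q.support → z = a := by
    intro z hzp hzq
    by_contra hz
    have hEq : p.dropUntil z hzp = q.dropUntil z hzq := by
      have h := hT.IsAcyclic.path_unique ⟨_, hP.dropUntil hzp⟩ ⟨_, hQ.dropUntil hzq⟩
      exact congrArg Subtype.val h
    apply huv
    calc u = (p.dropUntil z hzp).getVert ((p.dropUntil z hzp).length - 1) := by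
            rw [getVert_last_dropUntil hzp hz, hpu]
      _ = (q.dropUntil z hzq).getVert ((q.dropUntil z hzq).length - 1) := by rw [hEq]
      _ = v := by rw [getVert_last_dropUntil hzq hz, hqv]
  have hpath : (p.append q.reverse).IsPath := by
    rw [Walk.isPath_def, Walk.support_append, List.nodup_append]
    refine ⟨hP.support_nodup, (hQ.reverse.support_nodup).tail, ?_⟩
    intro z hzp w hzt hzw
    subst hzw
    have hzq : z ∈ q.support := by
      have h1 : z ∈ q.reverse.support := List.mem_of_mem_tail hzt
      rwa [Walk.support_reverse, List.mem_reverse] at h1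
    have hza := hint z hzp hzq
    subst hza
    have hnd := hQ.reverse.support_nodup
    rw [q.reverse.support_eq_cons] at hnd
    exact (List.nodup_cons.mp hnd).1 hzt
  have hlen := path_len hT hpath
  rw [Walk.length_append, Walk.length_reverse, hpl, hql] at hlen
  omega

/-- The four-point condition in a tree: among the three pairings, each sum is at most the
maximum of the other two. -/
private lemma fourpt (hT : T.IsTree) (a b c d : V) :
    T.dist a d + T.dist b c ≤ max (T.dist a b + T.dist c d) (T.dist a c + T.dist b d) ∧
    T.dist a b + T.dist c d ≤ max (T.dist a d + T.dist b c) (T.dist a c + T.dist b d) ∧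
    T.dist a c + T.dist b d ≤ max (T.dist a d + T.dist b c) (T.dist a b + T.dist c d) := by
  have hc := hT.isConnected
  have key : ∀ (n : ℕ) (a b c d : V), T.dist a b + T.dist a c + T.dist a d ≤ n →
      (T.dist a d + T.dist b c ≤ max (T.dist a b + T.dist c d) (T.dist a c + T.dist b d) ∧
       T.dist a b + T.dist c d ≤ max (T.dist a d + T.dist b c) (T.dist a c + T.dist b d) ∧
       T.dist a c + T.dist b d ≤ max (T.dist a d + T.dist b c) (T.dist a b + T.dist c d)) := by
    intro n
    induction n with
    | zero =>
      intro a b c d hn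
      have hb : a = b := hc.dist_eq_zero_iff.mp (by omega)
      have hcc : a = c := hc.dist_eq_zero_iff.mp (by omega)
      have hd : a = d := hc.dist_eq_zero_iff.mp (by omega)
      subst hb; subst hcc; subst hd
      refine ⟨?_, ?_, ?_⟩ <;> simp
    | succ n ih =>
      intro a b c d hn
      by_cases hab : a = b
      · subst hab
        have t1 : T.dist c d ≤ T.dist c a + T.dist a d := hc.dist_triangle
        have c1 : T.dist c a = T.dist a c := SimpleGraph.dist_comm
        have z1 : T.dist a a = 0 := by simp
        refine ⟨?_, ?_, ?_⟩ <;> rw [le_max_iff] <;> omega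
      by_cases hac : a = c
      · subst hac
        have t1 : T.dist b d ≤ T.dist b a + T.dist a d := hc.dist_triangle
        have c1 : T.dist b a = T.dist a b := SimpleGraph.dist_comm
        have z1 : T.dist a a = 0 := by simp
        refine ⟨?_, ?_, ?_⟩ <;> rw [le_max_iff] <;> omega
      by_cases had : a = d
      · subst had
        have t1 : T.dist b c ≤ T.dist b a + T.dist a c := hc.dist_triangle
        have c1 : T.dist b a = T.dist a b := SimpleGraph.dist_comm
        have c2 : T.dist c a = T.dist a c := SimpleGraph.dist_comm
        have z1 : T.dist a a = 0 := by simp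
        refine ⟨?_, ?_, ?_⟩ <;> rw [le_max_iff] <;> omega
      obtain ⟨u, hau, hub⟩ := exists_toward hT hab
      obtain ⟨v, hav, hvc⟩ := exists_toward hT hac
      obtain ⟨w, haw, hwd⟩ := exists_toward hT had
      by_cases huv : u = v
      · by_cases huw : u = w
        · rw [← huv] at hvc
          rw [← huw] at hwd
          have hsum : T.dist u b + T.dist u c + T.dist u d ≤ n := by omega
          obtain ⟨H1, H2, H3⟩ := ih u b c d hsum
          rw [le_max_iff] at H1 H2 H3
          refine ⟨?_, ?_, ?_⟩ <;> rw [le_max_iff] <;> omega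
        · -- u = v ≠ w : a lies on [b,d] and [c,d]
          subst huv
          have e1 : T.dist b d = T.dist a b + T.dist a d := btw_of_branch hT hau haw huw hub hwd
          have e2 : T.dist c d = T.dist a c + T.dist a d := btw_of_branch hT hav haw huw hvc hwd
          have t1 : T.dist b c ≤ T.dist b a + T.dist a c := hc.dist_triangle
          have c1 : T.dist b a = T.dist a b := SimpleGraph.dist_comm
          refine ⟨?_, ?_, ?_⟩ <;> rw [le_max_iff] <;> omega
      · have e1 : T.dist b c = T.dist a b + T.dist a c := btw_of_branch hT hau hav huv hub hvc
        by_cases huw : u = w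
        · have hvw : v ≠ w := fun h => huv (huw.trans h.symm)
          have e2 : T.dist c d = T.dist a c + T.dist a d := btw_of_branch hT hav haw hvw hvc hwd
          have t1 : T.dist b d ≤ T.dist b a + T.dist a d := hc.dist_triangle
          have c1 : T.dist b a = T.dist a b := SimpleGraph.dist_comm
          refine ⟨?_, ?_, ?_⟩ <;> rw [le_max_iff] <;> omega
        · have e2 : T.dist b d = T.dist a b + T.dist a d := btw_of_branch hT hau haw huw hub hwd
          have t1 : T.dist c d ≤ T.dist c a + T.dist a d := hc.dist_triangle
          have c1 : T.dist c a = T.dist a c := SimpleGraph.dist_comm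
          refine ⟨?_, ?_, ?_⟩ <;> rw [le_max_iff] <;> omega
  exact key _ a b c d le_rfl

private lemma rat_min_iff (A B C : ℕ) :
    2 * (((A : ℚ) + B - C) / 2) ≤ min (A : ℚ) (B : ℚ) ↔ max A B ≤ C := by
  have h2 : 2 * (((A : ℚ) + B - C) / 2) = (A : ℚ) + B - C := by ring
  rw [h2]
  rcases le_total A B with hab | hab
  · rw [min_eq_left (show (A : ℚ) ≤ B from Nat.cast_le.mpr hab), max_eq_right hab]
    constructor
    · intro h
      have h' : (B : ℚ) ≤ C := by linarith
      exact_mod_cast h'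
    · intro h
      have h' : (B : ℚ) ≤ C := Nat.cast_le.mpr h
      linarith
  · rw [min_eq_right (show (B : ℚ) ≤ A from Nat.cast_le.mpr hab), max_eq_left hab]
    constructor
    · intro h
      have h' : (A : ℚ) ≤ C := by linarith
      exact_mod_cast h'
    · intro h
      have h' : (A : ℚ) ≤ C := Nat.cast_le.mpr h
      linarith

private lemma rat_sum_iff (A B C D E : ℕ) :
    ((A : ℚ) + B - C) / 2 + ((B : ℚ) + D - E) / 2 < (B : ℚ) ↔ A + D < C + E := by
  constructor
  · intro h
    have h' : (A : ℚ) + D < C + E := by linarith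
    exact_mod_cast h'
  · intro h
    have h' : (A : ℚ) + D < (C : ℚ) + E := by exact_mod_cast h
    linarith

end Helpers


/-- N2 ↔ N2′, and (assuming N2) N3 ↔ N3′. -/
theorem statement_4 {V : Type*} (T : SimpleGraph V) (hT : T.IsTree) (v0 : V)
    (X : Set (T ≃g T)) (hXfin : X.Finite) :
    (N2 T v0 X ↔ N2' T v0 X) ∧ (N2 T v0 X → (N3 T v0 X ↔ N3' T v0 X)) := by
  classical
  have hc := hT.isConnected
  have hiso : ∀ (g : T ≃g T) (u w : V), T.dist (g u) (g w) = T.dist u w := by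
    intro g u w
    apply le_antisymm
    · obtain ⟨p, hl⟩ := (hc u w).exists_walk_length_eq_dist
      calc T.dist (g u) (g w) ≤ (p.map g.toHom).length := SimpleGraph.dist_le _
        _ = T.dist u w := by rw [SimpleGraph.Walk.length_map, hl]
    · obtain ⟨p, hl⟩ := (hc (g u) (g w)).exists_walk_length_eq_dist
      have h1 : T.dist (g.symm (g u)) (g.symm (g w)) ≤ T.dist (g u) (g w) := by
        calc T.dist (g.symm (g u)) (g.symm (g w)) ≤ (p.map g.symm.toHom).length :=
              SimpleGraph.dist_le _
          _ = T.dist (g u) (g w) := by rw [SimpleGraph.Walk.length_map, hl]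
      rwa [g.symm_apply_apply, g.symm_apply_apply] at h1
  have hninv : ∀ g : T ≃g T, nrm T v0 g⁻¹ = nrm T v0 g := by
    intro g
    show T.dist v0 (g⁻¹ v0) = T.dist v0 (g v0)
    have h1 : T.dist (g v0) (g (g⁻¹ v0)) = T.dist v0 (g⁻¹ v0) := hiso g v0 (g⁻¹ v0)
    rw [RelIso.apply_inv_self] at h1
    rw [← h1, SimpleGraph.dist_comm]
  have hdlt : ∀ g h : T ≃g T, dlt T v0 g⁻¹ h =
      ((nrm T v0 g : ℚ) + (nrm T v0 h : ℚ) - (nrm T v0 (g * h) : ℚ)) / 2 := by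
    intro g h
    simp only [dlt, inv_inv, hninv]
  have hnhalf : ∀ x y : T ≃g T, (2 * dlt T v0 x⁻¹ y ≤
      min (nrm T v0 x : ℚ) (nrm T v0 y : ℚ) ↔
      max (nrm T v0 x) (nrm T v0 y) ≤ nrm T v0 (x * y)) := by
    intro x y
    rw [hdlt, rat_min_iff]
  have hsum : ∀ x y z : T ≃g T, (dlt T v0 x⁻¹ y + dlt T v0 y⁻¹ z < (nrm T v0 y : ℚ) ↔
      nrm T v0 x + nrm T v0 z < nrm T v0 (x * y) + nrm T v0 (y * z)) := by
    intro x y z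
    rw [hdlt, hdlt, rat_sum_iff]
  have hpts : ∀ x y z : T ≃g T,
      (nrm T v0 (x*y*z) + nrm T v0 y ≤
        max (nrm T v0 x + nrm T v0 z) (nrm T v0 (x*y) + nrm T v0 (y*z)) ∧
       nrm T v0 x + nrm T v0 z ≤
        max (nrm T v0 (x*y*z) + nrm T v0 y) (nrm T v0 (x*y) + nrm T v0 (y*z)) ∧
       nrm T v0 (x*y) + nrm T v0 (y*z) ≤
        max (nrm T v0 (x*y*z) + nrm T v0 y) (nrm T v0 x + nrm T v0 z)) := by
    intro x y z
    have h4 := fourpt hT v0 (x v0) ((x*y) v0) ((x*y*z) v0)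
    have e1 : T.dist v0 (x v0) = nrm T v0 x := rfl
    have e2 : T.dist (x v0) ((x*y) v0) = nrm T v0 y := by
      have h := hiso x v0 (y v0)
      rw [show (x*y) v0 = x (y v0) from rfl]
      exact h
    have e3 : T.dist ((x*y) v0) ((x*y*z) v0) = nrm T v0 z := by
      have h := hiso (x*y) v0 (z v0)
      rw [show (x*y*z) v0 = (x*y) (z v0) from rfl]
      exact h
    have e4 : T.dist v0 ((x*y) v0) = nrm T v0 (x*y) := rfl
    have e5 : T.dist (x v0) ((x*y*z) v0) = nrm T v0 (y*z) := by
      have h := hiso x v0 ((y*z) v0)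
      rw [show (x*y*z) v0 = x ((y*z) v0) from by rw [mul_assoc]; exact RelIso.mul_apply x (y*z) v0]
      exact h
    have e6 : T.dist v0 ((x*y*z) v0) = nrm T v0 (x*y*z) := rfl
    rw [e1, e2, e3, e4, e5, e6] at h4
    exact h4
  refine ⟨⟨?_, ?_⟩, fun _hN2 => ⟨?_, ?_⟩⟩
  · intro h x hx y hy hxy
    rw [hnhalf x y]
    exact h x hx y hy hxy
  · intro h x hx y hy hxy
    have hh := h x hx y hy hxy
    rw [hnhalf x y] at hh
    exact hh
  · intro h x hx y hy z hz hxy hyz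
    have hh := h x hx y hy z hz hxy hyz
    obtain ⟨H1, H2, H3⟩ := hpts x y z
    rw [le_max_iff] at H1 H2 H3
    rw [hsum x y z]
    omega
  · intro h x hx y hy z hz hxy hyz
    have hh := h x hx y hy z hz hxy hyz
    rw [hsum x y z] at hh
    obtain ⟨H1, H2, H3⟩ := hpts x y z
    rw [le_max_iff] at H1 H2 H3
    omega

end TreePaper

end
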